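/- Let G be a D-regular graph and x~y an edge. Then κ(x,y) ≤ (2 + #Δ(x,y))/D, where #Δ(x,y) is the number of triangles containing the edge x~y (equivalently, the number of common neighbors of x and y). -/
import Mathlib

open Finset

namespace BMS

open scoped Classical

variable {V : Type*}

/-- The uniform probability measure on the closed 1-ball of `x` in a `D`-regular graph. -/
noncomputable def mu (G : SimpleGraph V) (D : ℕ) (x : V) : V → ℝ :=
  fun v => if G.dist x v ≤ 1 then 1 / (D + 1) else 0

/-- The L¹-Wasserstein distance between `μ_x` and `μ_y`, as an infimum over transport plans. -/
noncomputable def W1 (G : SimpleGraph V) [Fintype V] (D : ℕ) (x y : V) : ℝ :=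
  sInf { c : ℝ | ∃ π : V → V → ℝ,
    (∀ u v, 0 ≤ π u v) ∧
    (∀ u, ∑ v, π u v = mu G D x u) ∧
    (∀ v, ∑ u, π u v = mu G D y v) ∧
    c = ∑ u, ∑ v, (G.dist u v : ℝ) * π u v }

/-- Ollivier Ricci curvature (Lin–Lu–Yau normalization for regular graphs). -/
noncomputable def kappa (G : SimpleGraph V) [Fintype V] (D : ℕ) (x y : V) : ℝ :=
  ((D + 1) / D) * (1 - W1 G D x y)

/-- `G` is Bonnet–Myers sharp: the infimum of the curvature over edges equals `2 / L`. -/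
def BMSharp (G : SimpleGraph V) [Fintype V] (D L : ℕ) : Prop :=
  sInf { k : ℝ | ∃ x y, G.Adj x y ∧ k = kappa G D x y } = 2 / (L : ℝ)

/-- Number of neighbors of `y` at distance `k` from `x0`. -/
noncomputable def sphDeg (G : SimpleGraph V) [Fintype V] (x0 y : V) (k : ℕ) : ℕ :=
  (Finset.univ.filter (fun v => G.Adj y v ∧ G.dist x0 v = k)).card

/-- Number of triangles containing the edge `x ~ y` (common neighbors of `x` and `y`). -/
noncomputable def tri (G : SimpleGraph V) [Fintype V] (x y : V) : ℕ :=
  (Finset.univ.filter (fun v => G.Adj x v ∧ G.Adj y v)).card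

/-- A good optimal transport map from `B_1(a)` to `B_1(b)`: a bijection between the 1-balls,
fixing exactly the vertices of `B_1(a) ∩ B_1(b)` (among the domain), whose cost realizes
the Wasserstein distance `W1 (μ_a, μ_b)`. -/
def goodMap (G : SimpleGraph V) [Fintype V] (D : ℕ) (a b : V) (T : V → V) : Prop :=
  Set.BijOn T {v | G.dist a v ≤ 1} {v | G.dist b v ≤ 1} ∧
  (∀ v, G.dist a v ≤ 1 → (T v = v ↔ G.dist b v ≤ 1)) ∧
  (1 / (D + 1 : ℝ)) *
      ∑ v ∈ Finset.univ.filter (fun v => G.dist a v ≤ 1), (G.dist v (T v) : ℝ) =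
    W1 G D a b

lemma dist_le_one_iff (G : SimpleGraph V) (hconn : G.Connected) (z v : V) :
    G.dist z v ≤ 1 ↔ v = z ∨ G.Adj z v := by
  constructor
  · intro h
    interval_cases h' : G.dist z v
    · exact Or.inl (hconn.dist_eq_zero_iff.mp h').symm
    · exact Or.inr (SimpleGraph.dist_eq_one_iff_adj.mp h')
  · rintro (rfl | h)
    · simp [SimpleGraph.dist_self]
    · exact le_of_eq (SimpleGraph.dist_eq_one_iff_adj.mpr h)

lemma ball_card (G : SimpleGraph V) [Fintype V] (hconn : G.Connected)
    (D : ℕ) (hreg : G.IsRegularOfDegree D) (z : V) :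
    (Finset.univ.filter (fun v => G.dist z v ≤ 1)).card = D + 1 := by
  have : Finset.univ.filter (fun v => G.dist z v ≤ 1) = insert z (G.neighborFinset z) := by
    ext v
    simp [dist_le_one_iff G hconn z v, or_comm, eq_comm]
  rw [this, Finset.card_insert_of_notMem (by simp), G.card_neighborFinset_eq_degree, hreg z]

lemma mu_sum (G : SimpleGraph V) [Fintype V] (hconn : G.Connected)
    (D : ℕ) (hreg : G.IsRegularOfDegree D) (z : V) :
    ∑ v, mu G D z v = 1 := by
  unfold mu
  rw [← Finset.sum_filter]
  simp only [Finset.sum_const, nsmul_eq_mul, ball_card G hconn D hreg z]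
  have : ((D : ℝ) + 1) ≠ 0 := by positivity
  push_cast
  field_simp

theorem stmt [Fintype V] (G : SimpleGraph V) (hconn : G.Connected)
    (D : ℕ) (hD : 0 < D) (hreg : G.IsRegularOfDegree D)
    (x y : V) (hxy : G.Adj x y) :
    kappa G D x y ≤ (2 + (tri G x y : ℝ)) / D := by
  have hD1 : (0:ℝ) < (D:ℝ) + 1 := by positivity
  have hDpos : (0:ℝ) < (D:ℝ) := by exact_mod_cast hD
  -- intersection card
  have hcard : (Finset.univ.filter (fun v => G.dist x v ≤ 1 ∧ G.dist y v ≤ 1)).card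
      = tri G x y + 2 := by
    have hne : x ≠ y := G.ne_of_adj hxy
    have hset : Finset.univ.filter (fun v => G.dist x v ≤ 1 ∧ G.dist y v ≤ 1)
        = insert x (insert y (Finset.univ.filter (fun v => G.Adj x v ∧ G.Adj y v))) := by
      ext v
      simp only [Finset.mem_filter, Finset.mem_univ, true_and, Finset.mem_insert,
        dist_le_one_iff G hconn]
      constructor
      · rintro ⟨hx | hx, hy | hy⟩
        · exact Or.inl hx
        · exact Or.inl hx
        · exact Or.inr (Or.inl hy)
        · exact Or.inr (Or.inr ⟨hx, hy⟩)
      · rintro (rfl | rfl | ⟨h1, h2⟩)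
        · exact ⟨Or.inl rfl, Or.inr (G.adj_symm hxy)⟩
        · exact ⟨Or.inr hxy, Or.inl rfl⟩
        · exact ⟨Or.inr h1, Or.inr h2⟩
    rw [hset, Finset.card_insert_of_notMem, Finset.card_insert_of_notMem]
    · rfl
    · simp [G.irrefl]
    · simp only [Finset.mem_insert, Finset.mem_filter, Finset.mem_univ, true_and]
      rintro (rfl | ⟨h, _⟩)
      · exact hne rfl
      · exact G.irrefl h
  -- lower bound on W1
  have hW1 : 1 - ((tri G x y : ℝ) + 2) / ((D:ℝ) + 1) ≤ W1 G D x y := by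
    apply le_csInf
    · -- nonempty : product plan
      refine ⟨_, fun u v => mu G D x u * mu G D y v, fun u v => ?_, fun u => ?_, fun v => ?_, rfl⟩
      · unfold mu; positivity
      · rw [← Finset.mul_sum, mu_sum G hconn D hreg, mul_one]
      · rw [← Finset.sum_mul, mu_sum G hconn D hreg, one_mul]
    · rintro c ⟨π, hpos, hmx, hmy, rfl⟩
      have key : ∀ u, (mu G D x u - π u u) ≤ ∑ v, (G.dist u v : ℝ) * π u v := by
        intro u
        rw [← hmx u]
        have : ∑ v, π u v - π u u = ∑ v ∈ Finset.univ.erase u, π u v := by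
          rw [Finset.sum_erase_eq_sub (Finset.mem_univ u)]
        calc ∑ v, π u v - π u u = ∑ v ∈ Finset.univ.erase u, π u v := this
          _ ≤ ∑ v ∈ Finset.univ.erase u, (G.dist u v : ℝ) * π u v := by
              apply Finset.sum_le_sum
              intro v hv
              have hne : u ≠ v := fun h => (Finset.mem_erase.mp hv).1 h.symm
              have : 1 ≤ G.dist u v := hconn.pos_dist_of_ne hne
              have h1 : (1:ℝ) ≤ (G.dist u v : ℝ) := by exact_mod_cast this
              nlinarith [hpos u v]
          _ ≤ ∑ v, (G.dist u v : ℝ) * π u v := by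
              apply Finset.sum_le_sum_of_subset_of_nonneg (Finset.erase_subset _ _)
              intro v _ _
              have : (0:ℝ) ≤ (G.dist u v : ℝ) := by positivity
              exact mul_nonneg this (hpos u v)
      have hsum : ∑ u, (mu G D x u - π u u) ≤ ∑ u, ∑ v, (G.dist u v : ℝ) * π u v :=
        Finset.sum_le_sum (fun u _ => key u)
      have hdiag : ∑ u, π u u ≤ ((tri G x y : ℝ) + 2) / ((D:ℝ) + 1) := by
        have hle : ∀ u, π u u ≤ min (mu G D x u) (mu G D y u) := by
          intro u
          refine le_min ?_ ?_
          · rw [← hmx u]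
            exact Finset.single_le_sum (fun v _ => hpos u v) (Finset.mem_univ u)
          · rw [← hmy u]
            exact Finset.single_le_sum (fun v _ => hpos v u) (Finset.mem_univ u)
        calc ∑ u, π u u ≤ ∑ u, min (mu G D x u) (mu G D y u) :=
              Finset.sum_le_sum (fun u _ => hle u)
          _ = ((tri G x y : ℝ) + 2) / ((D:ℝ) + 1) := by
              have : ∀ u, min (mu G D x u) (mu G D y u)
                  = if G.dist x u ≤ 1 ∧ G.dist y u ≤ 1 then 1 / ((D:ℝ) + 1) else 0 := by
                intro u
                unfold mu
                have h1 : (0:ℝ) ≤ 1 / ((D:ℝ)+1) := by positivity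
                by_cases hx : G.dist x u ≤ 1 <;> by_cases hy : G.dist y u ≤ 1 <;>
                  simp [hx, hy, h1, min_eq_left, min_eq_right]
                all_goals positivity
              rw [Finset.sum_congr rfl (fun u _ => this u), ← Finset.sum_filter]
              simp only [Finset.sum_const, nsmul_eq_mul, hcard]
              push_cast
              field_simp
              try ring
      have hmusum : ∑ u, mu G D x u = 1 := mu_sum G hconn D hreg x
      have : 1 - ∑ u, π u u ≤ ∑ u, ∑ v, (G.dist u v : ℝ) * π u v := by
        rw [Finset.sum_sub_distrib, hmusum] at hsum
        linarith
      linarith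
  unfold kappa
  rw [div_mul_eq_mul_div, div_le_div_iff₀ hDpos hDpos]
  have h1 : ((D:ℝ)+1) * (1 - W1 G D x y) ≤ ((D:ℝ)+1) * (((tri G x y : ℝ) + 2) / ((D:ℝ)+1)) := by
    apply mul_le_mul_of_nonneg_left _ (le_of_lt hD1)
    linarith
  rw [mul_div_cancel₀ _ (ne_of_gt hD1)] at h1
  nlinarith

end BMS
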